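/- Let x ∈ L_+ with normal form x = a_1 e_1 + ⋯ + a_n e_n + a c (so a ≥ 0). Then for every integer t ≥ 2, the homogeneous component S_{tx−c} is contained in ∑_{i=1}^n S_{x − a_i e_i} · S_{(t−1)x − (p_i − a_i)e_i}, as ℂ-subspaces of S. -/

import Mathlib

noncomputable section

open MvPolynomial

def LRel (ι : Type) [DecidableEq ι] (p : ι → ℕ) : AddSubgroup (Option ι → ℤ) :=
  AddSubgroup.closure
    { v | ∃ i : ι, v = (p i : ℤ) • Pi.single (some i) 1 - Pi.single (none : Option ι) 1 }

abbrev LGroup (ι : Type) [DecidableEq ι] (p : ι → ℕ) : Type :=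
  (Option ι → ℤ) ⧸ LRel ι p

def egen {ι : Type} [DecidableEq ι] (p : ι → ℕ) (i : ι) : LGroup ι p :=
  QuotientAddGroup.mk (Pi.single (some i) 1)

def cgen {ι : Type} [DecidableEq ι] (p : ι → ℕ) : LGroup ι p :=
  QuotientAddGroup.mk (Pi.single (none : Option ι) 1)

def Lplus {ι : Type} [DecidableEq ι] (p : ι → ℕ) : AddSubmonoid (LGroup ι p) :=
  AddSubmonoid.closure (Set.range (egen p))

abbrev SPoly (ι : Type) : Type := MvPolynomial (ι ⊕ Fin 2) ℂ

def SIdl (ι : Type) (p : ι → ℕ) (c0 c1 : ι → ℂ) : Ideal (SPoly ι) :=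
  Ideal.span { f | ∃ i : ι,
    f = X (Sum.inl i) ^ (p i) - (C (c0 i) * X (Sum.inr 0) + C (c1 i) * X (Sum.inr 1)) }

abbrev SAlg (ι : Type) (p : ι → ℕ) (c0 c1 : ι → ℂ) : Type := SPoly ι ⧸ SIdl ι p c0 c1

def wtA {ι : Type} [Fintype ι] [DecidableEq ι] (p : ι → ℕ) (m : (ι ⊕ Fin 2) →₀ ℕ) :
    LGroup ι p :=
  (∑ i : ι, m (Sum.inl i) • egen p i) + (m (Sum.inr 0) + m (Sum.inr 1)) • cgen p

def polyCompA {ι : Type} [Fintype ι] [DecidableEq ι] (p : ι → ℕ) (y : LGroup ι p) :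
    Submodule ℂ (SPoly ι) where
  carrier := { f | ∀ m, coeff m f ≠ 0 → wtA p m = y }
  add_mem' := by
    intro f g hf hg m hm
    by_cases h : coeff m f = 0
    · refine hg m fun h' => hm ?_
      simp [coeff_add, h, h']
    · exact hf m h
  zero_mem' := by
    intro m hm
    simp at hm
  smul_mem' := by
    intro c f hf m hm
    refine hf m fun h => hm ?_
    simp [coeff_smul, h]

def SCompA {ι : Type} [Fintype ι] [DecidableEq ι] (p : ι → ℕ) (c0 c1 : ι → ℂ)
    (y : LGroup ι p) : Submodule ℂ (SAlg ι p c0 c1) :=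
  (polyCompA p y).map (Ideal.Quotient.mkₐ ℂ (SIdl ι p c0 c1)).toLinearMap

def SVerA {ι : Type} [Fintype ι] [DecidableEq ι] (p : ι → ℕ) (c0 c1 : ι → ℂ)
    (x : LGroup ι p) : Submodule ℂ (SAlg ι p c0 c1) :=
  ⨆ k : ℤ, SCompA p c0 c1 (k • x)

def SShiftA {ι : Type} [Fintype ι] [DecidableEq ι] (p : ι → ℕ) (c0 c1 : ι → ℂ)
    (y x : LGroup ι p) : Submodule ℂ (SAlg ι p c0 c1) :=
  ⨆ k : ℤ, SCompA p c0 c1 (y + k • x)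

namespace Stmt9

variable {n : ℕ} {p : Fin n → ℕ}

def val (p : Fin n → ℕ) (f : Fin n → ℤ) (g : ℤ) : LGroup (Fin n) p :=
  (∑ j, f j • egen p j) + g • cgen p

def chiAux (p : Fin n → ℕ) : (Option (Fin n) → ℤ) →+ ℚ :=
  AddMonoidHom.mk' (fun w => (∑ i, (w (some i) : ℚ) / (p i)) + w none) (by
    intro u v
    simp only [Pi.add_apply]
    push_cast
    simp only [add_div, Finset.sum_add_distrib]
    ring)

lemma chiAux_ker (hp : ∀ i, p i ≠ 0) : (LRel (Fin n) p) ≤ (chiAux p).ker := by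
  rw [LRel, AddSubgroup.closure_le]
  rintro v ⟨i, rfl⟩
  simp only [SetLike.mem_coe, AddMonoidHom.mem_ker, chiAux, AddMonoidHom.mk'_apply]
  have h1 : ∀ j, (((p i : ℤ) • Pi.single (some i) 1 - Pi.single (none : Option (Fin n)) 1 :
      Option (Fin n) → ℤ) (some j)) = if j = i then (p i : ℤ) else 0 := by
    intro j
    simp [Pi.single_apply, eq_comm]
  have h2 : (((p i : ℤ) • Pi.single (some i) 1 - Pi.single (none : Option (Fin n)) 1 :
      Option (Fin n) → ℤ) none) = -1 := by
    simp [Pi.single_apply]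
  rw [h2]
  have h3 : ∀ j : Fin n, (((((p i : ℤ) • Pi.single (some i) 1 - Pi.single (none : Option (Fin n)) 1 :
      Option (Fin n) → ℤ) (some j)) : ℚ) / (p j)) = if j = i then ((p i : ℚ) / (p i)) else 0 := by
    intro j
    rw [h1 j]
    split
    · next h => subst h; norm_num
    · norm_num
  rw [Finset.sum_congr rfl (fun j _ => h3 j), Finset.sum_ite_eq' Finset.univ i]
  simp [div_self, (Nat.cast_ne_zero (R := ℚ)).2 (hp i)]

def chi (p : Fin n → ℕ) (hp : ∀ i, p i ≠ 0) : LGroup (Fin n) p →+ ℚ :=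
  QuotientAddGroup.lift (LRel (Fin n) p) (chiAux p) (chiAux_ker hp)

def psiAux (p : Fin n → ℕ) (i : Fin n) : (Option (Fin n) → ℤ) →+ ZMod (p i) :=
  (Int.castAddHom (ZMod (p i))).comp (Pi.evalAddMonoidHom (fun _ : Option (Fin n) => ℤ) (some i))

lemma psiAux_ker (i : Fin n) : (LRel (Fin n) p) ≤ (psiAux p i).ker := by
  rw [LRel, AddSubgroup.closure_le]
  rintro v ⟨j, rfl⟩
  simp only [SetLike.mem_coe, AddMonoidHom.mem_ker, psiAux, AddMonoidHom.comp_apply,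
    Pi.evalAddMonoidHom_apply, Int.coe_castAddHom]
  have h1 : (((p j : ℤ) • Pi.single (some j) 1 - Pi.single (none : Option (Fin n)) 1 :
      Option (Fin n) → ℤ) (some i)) = if j = i then (p j : ℤ) else 0 := by
    simp [Pi.single_apply, eq_comm]
  rw [h1]
  split
  · next h => subst h; simp
  · simp

def psi (p : Fin n → ℕ) (i : Fin n) : LGroup (Fin n) p →+ ZMod (p i) :=
  QuotientAddGroup.lift (LRel (Fin n) p) (psiAux p i) (psiAux_ker i)

lemma psi_egen (i j : Fin n) : psi p i (egen p j) = if j = i then 1 else 0 := by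
  show psiAux p i _ = _
  simp [psiAux, Pi.single_apply, eq_comm]

lemma psi_cgen (i : Fin n) : psi p i (cgen p) = 0 := by
  show psiAux p i _ = _
  simp [psiAux, Pi.single_apply]

lemma chi_egen (hp : ∀ i, p i ≠ 0) (j : Fin n) : chi p hp (egen p j) = 1 / (p j : ℚ) := by
  show chiAux p _ = _
  simp only [chiAux, AddMonoidHom.mk'_apply]
  have h1 : ∀ i, ((Pi.single (some j) 1 : Option (Fin n) → ℤ) (some i) : ℚ) / (p i)
      = if i = j then 1 / (p j : ℚ) else 0 := by
    intro i
    simp [Pi.single_apply]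
    split <;> simp_all
  rw [Finset.sum_congr rfl (fun i _ => h1 i)]
  rw [Finset.sum_ite_eq' Finset.univ j]
  simp [Pi.single_apply]

lemma chi_cgen (hp : ∀ i, p i ≠ 0) : chi p hp (cgen p) = 1 := by
  show chiAux p _ = _
  simp [chiAux, Pi.single_apply]

lemma psi_val (i : Fin n) (f : Fin n → ℤ) (g : ℤ) :
    psi p i (val p f g) = (f i : ZMod (p i)) := by
  simp only [val, map_add, map_sum, map_zsmul, psi_egen, psi_cgen, smul_zero, add_zero]
  have h1 : ∀ j : Fin n, (f j • if j = i then (1 : ZMod (p i)) else 0)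
      = if j = i then ((f j : ZMod (p i))) else 0 := by
    intro j
    split <;> simp
  rw [Finset.sum_congr rfl (fun j _ => h1 j), Finset.sum_ite_eq' Finset.univ i]
  simp

lemma chi_val (hp : ∀ i, p i ≠ 0) (f : Fin n → ℤ) (g : ℤ) :
    chi p hp (val p f g) = (∑ j, (f j : ℚ) / (p j)) + g := by
  simp only [val, map_add, map_sum, map_zsmul, chi_egen, chi_cgen, zsmul_one]
  congr 1
  refine Finset.sum_congr rfl (fun j _ => ?_)
  rw [zsmul_eq_mul]
  push_cast
  ring

lemma psmul_egen (i : Fin n) : (p i : ℤ) • egen p i = cgen p := by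
  rw [egen, cgen, ← QuotientAddGroup.mk_zsmul]
  rw [QuotientAddGroup.eq]
  have : -((p i : ℤ) • (Pi.single (some i) 1 : Option (Fin n) → ℤ)) + Pi.single none 1
      = -((p i : ℤ) • (Pi.single (some i) 1 : Option (Fin n) → ℤ) - Pi.single none 1) := by abel
  rw [this]
  exact neg_mem (AddSubgroup.subset_closure ⟨i, rfl⟩)

lemma val_shift (f : Fin n → ℤ) (g : ℤ) (k : Fin n → ℤ) :
    val p f g = val p (fun j => f j + k j * p j) (g - ∑ j, k j) := by
  simp only [val]
  have h1 : ∀ j : Fin n, (f j + k j * p j) • egen p j = f j • egen p j + k j • cgen p := by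
    intro j
    rw [add_zsmul, mul_zsmul, psmul_egen]
  rw [Finset.sum_congr rfl (fun j _ => h1 j), Finset.sum_add_distrib,
    show ∑ x : Fin n, k x • cgen p = (∑ x, k x) • cgen p from (Finset.sum_smul).symm, sub_zsmul]
  abel

/-! ### Polynomial layer -/

lemma val_add (f f' : Fin n → ℤ) (g g' : ℤ) :
    val p f g + val p f' g' = val p (fun j => f j + f' j) (g + g') := by
  simp only [val]
  rw [Finset.sum_congr rfl (fun j _ => add_zsmul (egen p j) (f j) (f' j)),
    Finset.sum_add_distrib, add_zsmul]
  abel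

lemma egen_eq_val (i : Fin n) : egen p i = val p (fun j => if j = i then 1 else 0) 0 := by
  simp only [val, zero_zsmul, add_zero]
  have h1 : ∀ j : Fin n, ((if j = i then (1:ℤ) else 0) • egen p j)
      = if j = i then egen p j else 0 := by
    intro j; split <;> simp
  rw [Finset.sum_congr rfl (fun j _ => h1 j), Finset.sum_ite_eq' Finset.univ i]
  simp

lemma Lplus_rep {x : LGroup (Fin n) p} (hx : x ∈ Lplus p) :
    ∃ β : Fin n → ℕ, x = val p (fun j => (β j : ℤ)) 0 := by
  refine AddSubmonoid.closure_induction ?_ ?_ ?_ hx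
  · rintro _ ⟨i, rfl⟩
    refine ⟨Pi.single i 1, ?_⟩
    rw [egen_eq_val i]
    congr 1
    funext j
    simp [Pi.single_apply]
  · exact ⟨0, by simp [val]⟩
  · rintro y z - - ⟨β, rfl⟩ ⟨γ, rfl⟩
    refine ⟨β + γ, ?_⟩
    rw [val_add]
    exact congrArg₂ (val p) (funext fun j => by push_cast [Pi.add_apply]; ring) (by ring)

lemma val_eq_extract (hp : ∀ i, p i ≠ 0) {f f' : Fin n → ℤ} {g g' : ℤ}
    (h : val p f g = val p f' g') :
    ∃ k : Fin n → ℤ, (∀ i, f i = f' i + k i * p i) ∧ g' = g + ∑ i, k i := by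
  have hdvd : ∀ i, (p i : ℤ) ∣ (f i - f' i) := by
    intro i
    have h0 := congrArg (psi p i) h
    rw [psi_val, psi_val] at h0
    have h1 : ((f i - f' i : ℤ) : ZMod (p i)) = 0 := by
      push_cast [h0]
      ring
    exact (ZMod.intCast_zmod_eq_zero_iff_dvd _ _).1 h1
  refine ⟨fun i => (f i - f' i) / (p i : ℤ), fun i => ?_, ?_⟩
  · have h2 := Int.ediv_mul_cancel (hdvd i)
    linarith [h2]
  · have hc := congrArg (chi p hp) h
    rw [chi_val, chi_val] at hc
    have key : ∀ i, (f i : ℚ) / (p i) - (f' i : ℚ) / (p i)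
        = (((f i - f' i) / (p i : ℤ) : ℤ) : ℚ) := by
      intro i
      rw [div_sub_div_same, Int.cast_div_charZero (hdvd i)]
      push_cast
      ring
    have hsum : (g' : ℚ) = g + ∑ i, (((f i - f' i) / (p i : ℤ) : ℤ) : ℚ) := by
      have h3 : ∑ i, (((f i - f' i) / (p i : ℤ) : ℤ) : ℚ)
          = ∑ j, (f j : ℚ) / (p j) - ∑ j, (f' j : ℚ) / (p j) := by
        rw [← Finset.sum_sub_distrib]
        exact Finset.sum_congr rfl (fun i _ => (key i).symm)
      rw [h3]
      linarith [hc]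
    exact_mod_cast hsum


def mexp (b : Fin n → ℕ) (α β : ℕ) : (Fin n ⊕ Fin 2) →₀ ℕ :=
  Finsupp.equivFunOnFinite.symm (Sum.elim b ![α, β])

@[simp] lemma mexp_inl (b : Fin n → ℕ) (α β : ℕ) (j : Fin n) :
    mexp b α β (Sum.inl j) = b j := by simp [mexp]

@[simp] lemma mexp_inr0 (b : Fin n → ℕ) (α β : ℕ) :
    mexp b α β (Sum.inr 0) = α := by simp [mexp]

@[simp] lemma mexp_inr1 (b : Fin n → ℕ) (α β : ℕ) :
    mexp b α β (Sum.inr 1) = β := by simp [mexp]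

lemma fin2_cases (k : Fin 2) : k = 0 ∨ k = 1 := by omega

lemma mexp_add (b b' : Fin n → ℕ) (α α' β β' : ℕ) :
    mexp b α β + mexp b' α' β' = mexp (b + b') (α + α') (β + β') := by
  ext o
  rcases o with j | k
  · simp
  · rcases fin2_cases k with rfl | rfl <;> simp

lemma wtA_mexp (b : Fin n → ℕ) (α β : ℕ) :
    wtA p (mexp b α β) = val p (fun j => (b j : ℤ)) ((α : ℤ) + β) := by
  simp only [wtA, val, mexp_inl, mexp_inr0, mexp_inr1]
  have h1 : ∀ j : Fin n, b j • egen p j = ((b j : ℤ)) • egen p j :=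
    fun j => (natCast_zsmul (egen p j) (b j)).symm
  have h2 : (α + β) • cgen p = ((α : ℤ) + β) • cgen p := by
    rw [← natCast_zsmul, Nat.cast_add]
  rw [Finset.sum_congr rfl (fun j _ => h1 j), h2]

lemma eq_mexp_self (m : (Fin n ⊕ Fin 2) →₀ ℕ) :
    m = mexp (fun j => m (Sum.inl j)) (m (Sum.inr 0)) (m (Sum.inr 1)) := by
  ext o
  rcases o with j | k
  · simp
  · rcases fin2_cases k with rfl | rfl <;> simp

lemma prodX_eq_monomial (b : Fin n → ℕ) (s : Finset (Fin n)) :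
    (∏ j ∈ s, (X (Sum.inl j) : SPoly (Fin n)) ^ b j)
      = monomial (∑ j ∈ s, Finsupp.single (Sum.inl j) (b j)) 1 := by
  induction s using Finset.induction with
  | empty => simp
  | insert _ _ hni ih =>
    rw [Finset.prod_insert hni, Finset.sum_insert hni, ih, X_pow_eq_monomial,
      monomial_mul, one_mul]

lemma monomial_mexp (b : Fin n → ℕ) (α β : ℕ) :
    (monomial (mexp b α β) (1 : ℂ) : SPoly (Fin n))
      = (∏ j, X (Sum.inl j) ^ b j) * X (Sum.inr 0) ^ α * X (Sum.inr 1) ^ β := by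
  rw [prodX_eq_monomial, X_pow_eq_monomial, X_pow_eq_monomial, monomial_mul, monomial_mul,
    one_mul, one_mul]
  have hexp : mexp b α β = ((∑ j, Finsupp.single (Sum.inl j) (b j))
      + Finsupp.single (Sum.inr 0) α) + Finsupp.single (Sum.inr 1) β := by
    ext o
    rcases o with j | k
    · simp [Finsupp.finset_sum_apply, Finsupp.single_apply]
    · rcases fin2_cases k with rfl | rfl <;>
        simp [Finsupp.finset_sum_apply, Finsupp.single_apply]
  rw [hexp]

lemma monomial_mem_polyCompA {y : LGroup (Fin n) p} (m : (Fin n ⊕ Fin 2) →₀ ℕ)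
    (h : wtA p m = y) (c : ℂ) : monomial m c ∈ polyCompA p y := by
  intro m' hm'
  rw [coeff_monomial] at hm'
  split at hm'
  · next h' => subst h'; exact h
  · exact absurd rfl hm'

section Comp
variable (c0 c1 : Fin n → ℂ)

lemma SCompA_le_of_monomials {y : LGroup (Fin n) p} {M : Submodule ℂ (SAlg (Fin n) p c0 c1)}
    (h : ∀ m : (Fin n ⊕ Fin 2) →₀ ℕ, wtA p m = y →
      Ideal.Quotient.mk (SIdl (Fin n) p c0 c1) (monomial m 1) ∈ M) :
    SCompA p c0 c1 y ≤ M := by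
  rintro z ⟨f, hf, rfl⟩
  have hrepr := (support_sum_monomial_coeff f).symm
  rw [AlgHom.toLinearMap_apply, hrepr, map_sum]
  refine Submodule.sum_mem M (fun m hm => ?_)
  have h1 : (monomial m) (coeff m f) = (coeff m f) • (monomial m (1:ℂ)) := by
    rw [smul_monomial, smul_eq_mul, mul_one]
  rw [h1, map_smul]
  exact Submodule.smul_mem M _ (h m (hf m (mem_support_iff.1 hm)))

end Comp

/-! ### the T-span -/

def Lin (c0 c1 : Fin n → ℂ) (j : Fin n) : SPoly (Fin n) :=
  C (c0 j) * X (Sum.inr 0) + C (c1 j) * X (Sum.inr 1)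

def TS (n : ℕ) (D : ℕ) : Submodule ℂ (SPoly (Fin n)) :=
  Submodule.span ℂ {f | ∃ α β : ℕ, α + β = D ∧ f = X (Sum.inr 0) ^ α * X (Sum.inr 1) ^ β}

lemma TS_mono_mem {α β D : ℕ} (h : α + β = D) :
    (X (Sum.inr 0) ^ α * X (Sum.inr 1) ^ β : SPoly (Fin n)) ∈ TS n D :=
  Submodule.subset_span ⟨α, β, h, rfl⟩

lemma one_mem_TS0 : (1 : SPoly (Fin n)) ∈ TS n 0 := by
  have := TS_mono_mem (n := n) (α := 0) (β := 0) rfl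
  simpa using this

lemma TS_mul {A B : ℕ} {f g : SPoly (Fin n)} (hf : f ∈ TS n A) (hg : g ∈ TS n B) :
    f * g ∈ TS n (A + B) := by
  have h1 : TS n A * TS n B ≤ TS n (A + B) := by
    rw [TS, TS, Submodule.span_mul_span]
    rw [Submodule.span_le]
    rintro w hw
    rw [Set.mem_mul] at hw
    obtain ⟨u, hu, v, hv, rfl⟩ := hw
    obtain ⟨α, β, hab, rfl⟩ := hu
    obtain ⟨α', β', hab', rfl⟩ := hv
    refine Submodule.subset_span ⟨α + α', β + β', by omega, ?_⟩
    rw [pow_add, pow_add]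
    ring
  exact h1 (Submodule.mul_mem_mul hf hg)

lemma Lin_mem_TS1 (c0 c1 : Fin n → ℂ) (j : Fin n) : Lin c0 c1 j ∈ TS n 1 := by
  have h0 : (X (Sum.inr 0) : SPoly (Fin n)) ∈ TS n 1 := by
    have := TS_mono_mem (n := n) (α := 1) (β := 0) rfl
    simpa using this
  have h1 : (X (Sum.inr 1) : SPoly (Fin n)) ∈ TS n 1 := by
    have := TS_mono_mem (n := n) (α := 0) (β := 1) rfl
    simpa using this
  rw [Lin, ← smul_eq_C_mul, ← smul_eq_C_mul]
  exact Submodule.add_mem _ (Submodule.smul_mem _ _ h0) (Submodule.smul_mem _ _ h1)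

lemma Lin_pow_mem (c0 c1 : Fin n → ℂ) (j : Fin n) (q : ℕ) : Lin c0 c1 j ^ q ∈ TS n q := by
  induction q with
  | zero => simpa using one_mem_TS0
  | succ q ih =>
    have := TS_mul ih (Lin_mem_TS1 c0 c1 j)
    simpa [pow_succ] using this

lemma Lin_prod_mem (c0 c1 : Fin n → ℂ) (f : Fin n → ℕ) (s : Finset (Fin n)) :
    (∏ j ∈ s, Lin c0 c1 j ^ f j) ∈ TS n (∑ j ∈ s, f j) := by
  induction s using Finset.induction with
  | empty => simpa using one_mem_TS0
  | insert _ _ hni ih =>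
    rw [Finset.prod_insert hni, Finset.sum_insert hni]
    exact TS_mul (Lin_pow_mem c0 c1 _ _) ih

section PF
variable (c0 c1 : Fin n → ℂ)

lemma Lin_comb (u v : ℂ) (j1 j2 : Fin n) :
    C u * Lin c0 c1 j1 + C v * Lin c0 c1 j2
      = C (u * c0 j1 + v * c0 j2) * X (Sum.inr 0) + C (u * c1 j1 + v * c1 j2) * X (Sum.inr 1) := by
  simp only [Lin, map_add, map_mul]
  ring

lemma two_lines_span (hd : ∀ i j : Fin n, i ≠ j → c0 i * c1 j ≠ c1 i * c0 j)
    {j1 j2 : Fin n} (hne : j1 ≠ j2) (D : ℕ) :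
    TS n (D + 1) ≤ Submodule.map (LinearMap.mulLeft ℂ (Lin c0 c1 j1)) (TS n D)
      ⊔ Submodule.map (LinearMap.mulLeft ℂ (Lin c0 c1 j2)) (TS n D) := by
  set δ : ℂ := c0 j1 * c1 j2 - c1 j1 * c0 j2 with hδdef
  have hδ : δ ≠ 0 := sub_ne_zero.2 (hd j1 j2 hne)
  have hX0 : C (c1 j2 / δ) * Lin c0 c1 j1 + C (-(c1 j1) / δ) * Lin c0 c1 j2
      = (X (Sum.inr 0) : SPoly (Fin n)) := by
    rw [Lin_comb]
    have e1 : c1 j2 / δ * c0 j1 + -(c1 j1) / δ * c0 j2 = 1 := by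
      field_simp
      ring
    have e2 : c1 j2 / δ * c1 j1 + -(c1 j1) / δ * c1 j2 = 0 := by
      field_simp
      ring
    rw [e1, e2]
    simp
  have hX1 : C (-(c0 j2) / δ) * Lin c0 c1 j1 + C (c0 j1 / δ) * Lin c0 c1 j2
      = (X (Sum.inr 1) : SPoly (Fin n)) := by
    rw [Lin_comb]
    have e1 : -(c0 j2) / δ * c0 j1 + c0 j1 / δ * c0 j2 = 0 := by
      field_simp
      ring
    have e2 : -(c0 j2) / δ * c1 j1 + c0 j1 / δ * c1 j2 = 1 := by
      field_simp
      ring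
    rw [e1, e2]
    simp
  rw [TS, Submodule.span_le]
  rintro f ⟨α, β, hab, rfl⟩
  rw [SetLike.mem_coe, Submodule.mem_sup]
  rcases Nat.eq_zero_or_pos α with hα | hα
  · -- β = D + 1
    subst hα
    have hβ : β = D + 1 := by omega
    subst hβ
    have hrest : (X (Sum.inr 0) ^ 0 * X (Sum.inr 1) ^ D : SPoly (Fin n)) ∈ TS n D :=
      TS_mono_mem (by omega)
    refine ⟨LinearMap.mulLeft ℂ (Lin c0 c1 j1) ((-(c0 j2) / δ) • (X (Sum.inr 0) ^ 0 * X (Sum.inr 1) ^ D)),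
      Submodule.mem_map_of_mem (Submodule.smul_mem _ _ hrest),
      LinearMap.mulLeft ℂ (Lin c0 c1 j2) ((c0 j1 / δ) • (X (Sum.inr 0) ^ 0 * X (Sum.inr 1) ^ D)),
      Submodule.mem_map_of_mem (Submodule.smul_mem _ _ hrest), ?_⟩
    simp only [LinearMap.mulLeft_apply, smul_eq_C_mul]
    calc Lin c0 c1 j1 * (C (-(c0 j2) / δ) * (X (Sum.inr 0) ^ 0 * X (Sum.inr 1) ^ D))
          + Lin c0 c1 j2 * (C (c0 j1 / δ) * (X (Sum.inr 0) ^ 0 * X (Sum.inr 1) ^ D))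
        = (C (-(c0 j2) / δ) * Lin c0 c1 j1 + C (c0 j1 / δ) * Lin c0 c1 j2)
            * (X (Sum.inr 0) ^ 0 * X (Sum.inr 1) ^ D) := by ring
      _ = X (Sum.inr 0) ^ 0 * X (Sum.inr 1) ^ (D + 1) := by rw [hX1]; ring
  · obtain ⟨α', rfl⟩ : ∃ α', α = α' + 1 := ⟨α - 1, by omega⟩
    have hrest : (X (Sum.inr 0) ^ α' * X (Sum.inr 1) ^ β : SPoly (Fin n)) ∈ TS n D :=
      TS_mono_mem (by omega)
    refine ⟨LinearMap.mulLeft ℂ (Lin c0 c1 j1) ((c1 j2 / δ) • (X (Sum.inr 0) ^ α' * X (Sum.inr 1) ^ β)),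
      Submodule.mem_map_of_mem (Submodule.smul_mem _ _ hrest),
      LinearMap.mulLeft ℂ (Lin c0 c1 j2) ((-(c1 j1) / δ) • (X (Sum.inr 0) ^ α' * X (Sum.inr 1) ^ β)),
      Submodule.mem_map_of_mem (Submodule.smul_mem _ _ hrest), ?_⟩
    simp only [LinearMap.mulLeft_apply, smul_eq_C_mul]
    calc Lin c0 c1 j1 * (C (c1 j2 / δ) * (X (Sum.inr 0) ^ α' * X (Sum.inr 1) ^ β))
          + Lin c0 c1 j2 * (C (-(c1 j1) / δ) * (X (Sum.inr 0) ^ α' * X (Sum.inr 1) ^ β))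
        = (C (c1 j2 / δ) * Lin c0 c1 j1 + C (-(c1 j1) / δ) * Lin c0 c1 j2)
            * (X (Sum.inr 0) ^ α' * X (Sum.inr 1) ^ β) := by ring
      _ = X (Sum.inr 0) ^ (α' + 1) * X (Sum.inr 1) ^ β := by rw [hX0]; ring

lemma PF (hd : ∀ i j : Fin n, i ≠ j → c0 i * c1 j ≠ c1 i * c0 j) (F : Finset (Fin n)) :
    F.Nonempty → ∀ D : ℕ, F.card ≤ D + 1 →
      TS n D ≤ ⨆ i ∈ F, Submodule.map
        (LinearMap.mulLeft ℂ (∏ j ∈ F.erase i, Lin c0 c1 j)) (TS n (D + 1 - F.card)) := by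
  induction F using Finset.strongInduction with
  | _ F ih =>
    intro hFne D hcard
    rcases Nat.lt_or_ge F.card 2 with hc1 | hc2
    · -- F.card = 1
      have hc : F.card = 1 := by
        have := Finset.card_pos.2 hFne
        omega
      obtain ⟨i0, rfl⟩ := Finset.card_eq_one.1 hc
      refine le_trans ?_ (le_iSup₂ (f := fun i (_ : i ∈ ({i0} : Finset (Fin n))) =>
        Submodule.map (LinearMap.mulLeft ℂ (∏ j ∈ ({i0} : Finset (Fin n)).erase i, Lin c0 c1 j))
          (TS n (D + 1 - ({i0} : Finset (Fin n)).card))) i0 (Finset.mem_singleton_self i0))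
      rw [Finset.erase_singleton, Finset.prod_empty, Finset.card_singleton,
        LinearMap.mulLeft_one, Nat.add_sub_cancel, Submodule.map_id]
    · -- F.card ≥ 2
      obtain ⟨i1, hi1, i2, hi2, hne⟩ := Finset.one_lt_card.1 hc2
      obtain ⟨D', rfl⟩ : ∃ D', D = D' + 1 := ⟨D - 1, by omega⟩
      refine le_trans (two_lines_span c0 c1 hd hne D') ?_
      have main : ∀ i' ∈ F, ∀ i'' ∈ F, i'' ≠ i' →
          Submodule.map (LinearMap.mulLeft ℂ (Lin c0 c1 i')) (TS n D') ≤
          ⨆ i ∈ F, Submodule.map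
            (LinearMap.mulLeft ℂ (∏ j ∈ F.erase i, Lin c0 c1 j)) (TS n (D' + 1 + 1 - F.card)) := by
        intro i' hi' i'' hi'' hne'
        have herase : F.erase i' ⊂ F := Finset.erase_ssubset hi'
        have hrec := ih (F.erase i') herase ⟨i'', Finset.mem_erase.2 ⟨hne', hi''⟩⟩ D'
          (by rw [Finset.card_erase_of_mem hi']; omega)
        refine le_trans (Submodule.map_mono hrec) ?_
        rw [Submodule.map_iSup]
        refine iSup_le (fun i => ?_)
        rw [Submodule.map_iSup]
        refine iSup_le (fun hi => ?_)
        have hiF : i ∈ F := (Finset.mem_erase.1 hi).2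
        have hineq : i ≠ i' := (Finset.mem_erase.1 hi).1
        rw [← Submodule.map_comp, ← LinearMap.mulLeft_mul]
        have hprod : Lin c0 c1 i' * ∏ j ∈ (F.erase i').erase i, Lin c0 c1 j
            = ∏ j ∈ F.erase i, Lin c0 c1 j := by
          rw [Finset.erase_right_comm]
          exact Finset.mul_prod_erase (F.erase i) (Lin c0 c1) (Finset.mem_erase.2 ⟨Ne.symm hineq, hi'⟩)
        rw [hprod, Finset.card_erase_of_mem hi',
          show D' + 1 - (F.card - 1) = D' + 1 + 1 - F.card by omega]
        exact le_iSup₂_of_le i hiF le_rfl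
      refine sup_le (main i1 hi1 i2 hi2 (Ne.symm hne)) (main i2 hi2 i1 hi1 hne)

end PF

lemma zsmul_finsum {M : Type*} [SubtractionCommMonoid M] (z : ℤ) (s : Finset (Fin n))
    (f : Fin n → M) : z • (∑ j ∈ s, f j) = ∑ j ∈ s, z • f j := by
  induction s using Finset.cons_induction with
  | empty => exact zsmul_zero z
  | cons j s hj ih => rw [Finset.sum_cons, Finset.sum_cons, zsmul_add, ih]


lemma val_zsmul (z : ℤ) (f : Fin n → ℤ) (g : ℤ) :
    z • val p f g = val p (fun j => z * f j) (z * g) := by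
  simp only [val]
  rw [zsmul_add, zsmul_finsum]
  exact congrArg₂ (· + ·)
    (Finset.sum_congr rfl fun j _ => (mul_zsmul (egen p j) z (f j)).symm)
    ((mul_zsmul (cgen p) z g).symm)

lemma val_neg (f : Fin n → ℤ) (g : ℤ) : -val p f g = val p (fun j => -f j) (-g) := by
  have h := val_zsmul (p := p) (-1) f g
  simp only [neg_one_mul] at h
  rw [← h, neg_one_zsmul]

lemma val_sub (f f' : Fin n → ℤ) (g g' : ℤ) :
    val p f g - val p f' g' = val p (fun j => f j - f' j) (g - g') := by
  rw [sub_eq_add_neg, val_neg, val_add]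
  exact congrArg₂ (val p) (funext fun j => by ring) (by ring)

lemma smul_egen_eq_val (z : ℤ) (i : Fin n) :
    z • egen p i = val p (fun j => if j = i then z else 0) 0 := by
  rw [egen_eq_val, val_zsmul]
  exact congrArg₂ (val p) (funext fun j => by split <;> ring) (by ring)

lemma natsum_eq_val (a : Fin n → ℕ) (aZ : ℤ) :
    (∑ i, a i • egen p i) + aZ • cgen p = val p (fun j => (a j : ℤ)) aZ := by
  simp only [val]
  exact congrArg (fun w => w + aZ • cgen p)
    (Finset.sum_congr rfl (fun j _ => (natCast_zsmul (egen p j) (a j)).symm))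

lemma cgen_eq_val : (cgen p : LGroup (Fin n) p) = val p 0 1 := by
  simp [val]

end Stmt9

set_option maxHeartbeats 2000000 in
open Stmt9 in
/-- For `x ∈ L₊` in normal form and every `t ≥ 2`,
`S_{tx−c} ⊆ ∑ᵢ S_{x−aᵢeᵢ} · S_{(t−1)x−(pᵢ−aᵢ)eᵢ}`. -/
theorem component_tx_sub_c_mem (n : ℕ) (hn : 1 ≤ n) (p : Fin n → ℕ) (hp : ∀ i, 2 ≤ p i)
    (c0 c1 : Fin n → ℂ) (hnz : ∀ i, (c0 i, c1 i) ≠ (0, 0))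
    (hdist : ∀ i j : Fin n, i ≠ j → c0 i * c1 j ≠ c1 i * c0 j)
    (x : LGroup (Fin n) p) (hxp : x ∈ Lplus p)
    (a : Fin n → ℕ) (ha : ∀ i, a i < p i) (aZ : ℤ)
    (hxnf : x = (∑ i, a i • egen p i) + aZ • cgen p) :
    ∀ t : ℤ, 2 ≤ t →
      SCompA p c0 c1 (t • x - cgen p) ≤
        ⨆ i : Fin n, SCompA p c0 c1 (x - a i • egen p i) *
          SCompA p c0 c1 ((t - 1) • x - ((p i : ℤ) - (a i : ℤ)) • egen p i) := by
  intro t ht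
  have hp0 : ∀ i, p i ≠ 0 := fun i => by have := hp i; omega
  have hxval : x = val p (fun j => (a j : ℤ)) aZ := by rw [hxnf, natsum_eq_val]
  have haZ : 0 ≤ aZ := by
    obtain ⟨β, hβ⟩ := Lplus_rep hxp
    obtain ⟨k, hk1, hk2⟩ := val_eq_extract hp0 (hβ.symm.trans hxval)
    have hknn : ∀ i, 0 ≤ k i := by
      intro i
      by_contra hneg
      push_neg at hneg
      have h1 := hk1 i
      have h2 : (0:ℤ) ≤ (β i : ℤ) := Int.natCast_nonneg _
      have h3 : (a i : ℤ) < p i := by exact_mod_cast ha i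
      have h4 : (0:ℤ) ≤ (a i : ℤ) := Int.natCast_nonneg _
      nlinarith
    rw [hk2]
    have := Finset.sum_nonneg (fun i (_ : i ∈ Finset.univ) => hknn i)
    linarith
  set I := SIdl (Fin n) p c0 c1 with hI
  set mk0 : SPoly (Fin n) →+* SAlg (Fin n) p c0 c1 := Ideal.Quotient.mk I with hmk
  have hXp : ∀ j : Fin n, (mk0 (X (Sum.inl j)))^(p j) = mk0 (Lin c0 c1 j) := by
    intro j
    rw [← map_pow, Ideal.Quotient.eq]
    exact Ideal.subset_span ⟨j, rfl⟩
  refine SCompA_le_of_monomials c0 c1 (fun m hm => ?_)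
  have hRHSval : t • x - cgen p = val p (fun j => t * (a j : ℤ)) (t * aZ - 1) := by
    rw [hxval, val_zsmul, cgen_eq_val, val_sub]
    exact congrArg₂ (val p) (funext fun j => by simp) (by ring)
  have hm' : val p (fun j => (m (Sum.inl j) : ℤ)) ((m (Sum.inr 0) : ℤ) + (m (Sum.inr 1)))
      = val p (fun j => t * (a j : ℤ)) (t * aZ - 1) := by
    rw [← hRHSval, ← hm]
    conv_rhs => rw [eq_mexp_self m]
    rw [wtA_mexp]
  obtain ⟨k, hk1, hk2⟩ := val_eq_extract hp0 hm'
  set R : Fin n → ℤ := fun j => (t * (a j : ℤ)) % (p j) with hR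
  set Q : Fin n → ℤ := fun j => (t * (a j : ℤ)) / (p j) with hQ
  have hpj : ∀ j, (0:ℤ) < (p j : ℤ) := fun j => by
    have := hp j; exact_mod_cast Nat.pos_of_ne_zero (hp0 j)
  have hQR : ∀ j, (p j : ℤ) * Q j + R j = t * (a j : ℤ) := fun j => Int.mul_ediv_add_emod _ _
  have hR0 : ∀ j, 0 ≤ R j := fun j => Int.emod_nonneg _ (ne_of_gt (hpj j))
  have hRlt : ∀ j, R j < p j := fun j => Int.emod_lt_of_pos _ (hpj j)
  have hQ0 : ∀ j, 0 ≤ Q j := fun j =>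
    Int.ediv_nonneg (mul_nonneg (by linarith) (Int.natCast_nonneg _)) (le_of_lt (hpj j))
  set r : Fin n → ℕ := fun j => (R j).toNat with hr
  have hrR : ∀ j, (r j : ℤ) = R j := fun j => Int.toNat_of_nonneg (hR0 j)
  set qn : Fin n → ℕ := fun j => (Q j + k j).toNat with hqn
  have hmsplitZ : ∀ j, (m (Sum.inl j) : ℤ) = (p j) * (Q j + k j) + R j := by
    intro j
    rw [hk1 j, ← hQR j]
    ring
  have hqnn : ∀ j, (qn j : ℤ) = Q j + k j := by
    intro j
    have h1 := hmsplitZ j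
    have h2 := Int.natCast_nonneg (m (Sum.inl j))
    have h3 := hRlt j
    have h4 := hpj j
    have h5 : 0 ≤ Q j + k j := by nlinarith
    exact Int.toNat_of_nonneg h5
  have hbsplit : ∀ j, m (Sum.inl j) = r j + p j * qn j := by
    intro j
    have h1 : (m (Sum.inl j) : ℤ) = (r j : ℤ) + (p j : ℤ) * (qn j : ℤ) := by
      rw [hrR j, hqnn j, hmsplitZ j]
      ring
    exact_mod_cast h1
  set d0 := m (Sum.inr 0) with hd0
  set d1 := m (Sum.inr 1) with hd1
  set F : Finset (Fin n) := Finset.univ.filter (fun j => r j < a j) with hF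
  have hmemF : ∀ j, j ∈ F ↔ r j < a j := by
    intro j
    simp [hF]
  have hQF : ∀ j ∈ F, 1 ≤ Q j := by
    intro j hj
    rw [hmemF] at hj
    by_contra hlt
    push_neg at hlt
    have hQj : Q j = 0 := le_antisymm (by omega) (hQ0 j)
    have h1 := hQR j
    rw [hQj] at h1
    have h2 : R j < (a j : ℤ) := by
      have := hrR j
      omega
    have h3 : (0:ℤ) ≤ (a j : ℤ) := Int.natCast_nonneg _
    have h4 : (t - 2) * (a j : ℤ) ≥ 0 := mul_nonneg (by linarith) h3
    nlinarith
  set D : ℕ := (∑ j, qn j) + (d0 + d1) with hD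
  have hDZ : (D : ℤ) = t * aZ - 1 + ∑ j, Q j := by
    have h1 : ((∑ j, qn j : ℕ) : ℤ) = ∑ j, (Q j + k j) := by
      push_cast
      exact Finset.sum_congr rfl (fun j _ => hqnn j)
    have h2 : ∑ j, (Q j + k j) = (∑ j, Q j) + ∑ j, k j := Finset.sum_add_distrib
    have h3 : (D:ℤ) = ((∑ j, qn j : ℕ) : ℤ) + (d0 + d1) := by
      rw [hD]; push_cast; ring
    rw [h3, h1, h2]
    linarith [hk2]
  -- the main claim
  have claim : ∀ i : Fin n, ∀ α β : ℕ, α + β + (F.erase i).card = D → aZ.toNat ≤ α + β →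
      mk0 (∏ j, X (Sum.inl j) ^ r j) *
        (mk0 (∏ j ∈ F.erase i, Lin c0 c1 j) * mk0 (X (Sum.inr 0) ^ α * X (Sum.inr 1) ^ β)) ∈
        SCompA p c0 c1 (x - a i • egen p i) *
          SCompA p c0 c1 ((t - 1) • x - ((p i : ℤ) - (a i : ℤ)) • egen p i) := by
    intro i α β hαβ hle
    have haZnZ : ((aZ.toNat : ℕ) : ℤ) = aZ := Int.toNat_of_nonneg haZ
    set aZn := aZ.toNat with haZn
    set α₁ := min α aZn with hα₁
    set β₁ := aZn - α₁ with hβ₁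
    set α₂ := α - α₁ with hα₂
    set β₂ := β - β₁ with hβ₂
    have hs1 : α₁ + β₁ = aZn := by omega
    have hs2 : α₁ + α₂ = α := by omega
    have hs3 : β₁ + β₂ = β := by omega
    set vexp : Fin n → ℕ := fun j => if j = i then r i
      else r j + (if r j < a j then p j else 0) - a j with hvexp
    have hvc : ∀ j, ((vexp j : ℕ) : ℤ)
        = if j = i then R i else R j + (if r j < a j then (p j : ℤ) else 0) - a j := by
      intro j
      by_cases hji : j = i
      · subst hji
        simp only [hvexp, if_pos rfl]
        exact hrR j
      · have h1 := hrR j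
        have h2 := ha j
        simp only [hvexp, if_neg hji]
        by_cases hrj : r j < a j
        · rw [if_pos hrj, if_pos hrj]
          omega
        · rw [if_neg hrj, if_neg hrj]
          omega
    have hu : wtA p (mexp (Function.update a i 0) α₁ β₁) = x - a i • egen p i := by
      rw [wtA_mexp, ← natCast_zsmul (egen p i) (a i), smul_egen_eq_val, hxval, val_sub]
      refine congrArg₂ (val p) (funext fun j => ?_) ?_
      · by_cases hji : j = i
        · subst hji
          simp [Function.update_self]
        · simp [Function.update_of_ne hji, hji]
      · omega
    have hv : wtA p (mexp vexp α₂ β₂) = (t - 1) • x - ((p i : ℤ) - (a i : ℤ)) • egen p i := by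
      rw [wtA_mexp]
      have step1 : (t - 1) • x - ((p i : ℤ) - (a i : ℤ)) • egen p i
          = val p (fun j => (t - 1) * (a j : ℤ) - (if j = i then (p i : ℤ) - (a i : ℤ) else 0))
              ((t - 1) * aZ - 0) := by
        rw [hxval, val_zsmul, smul_egen_eq_val, val_sub]
      rw [step1]
      conv_rhs => rw [val_shift (p := p) _ _
        (fun j => (if j = i then 1 else if r j < a j then 1 else 0) - Q j)]
      refine congrArg₂ (val p) (funext fun j => ?_) ?_
      · beta_reduce
        rw [hvc j]
        by_cases hji : j = i
        · subst hji
          simp only [if_pos rfl, eq_self_iff_true, if_true]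
          linear_combination hQR j
        · simp only [if_neg hji]
          by_cases hrj : r j < a j
          · simp only [if_pos hrj]
            linear_combination hQR j
          · simp only [if_neg hrj]
            linear_combination hQR j
      · beta_reduce
        have hFe : ((F.erase i).card : ℤ) = ∑ j ∈ Finset.univ.erase i, (if r j < a j then (1:ℤ) else 0) := by
          have h1 : F.erase i = (Finset.univ.erase i).filter (fun j => r j < a j) := by
            ext j
            simp only [hF, Finset.mem_erase, Finset.mem_filter, Finset.mem_univ, true_and,
              and_comm]
          rw [h1, Finset.sum_boole]
        have hsum : ∑ j, ((if j = i then (1:ℤ) else if r j < a j then 1 else 0) - Q j)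
            = (1 + ((F.erase i).card : ℤ)) - ∑ j, Q j := by
          rw [Finset.sum_sub_distrib]
          congr 1
          rw [← Finset.add_sum_erase Finset.univ _ (Finset.mem_univ i)]
          rw [if_pos rfl]
          congr 1
          rw [hFe]
          exact Finset.sum_congr rfl (fun j hj => by rw [if_neg (Finset.mem_erase.1 hj).1])
        rw [hsum]
        have hαβZ : (α:ℤ) + β + ((F.erase i).card : ℤ) = D := by exact_mod_cast hαβ
        have e1 : (t - 1) * aZ = t * aZ - aZ := by ring
        have hcast : (α₂:ℤ) + β₂ = (α:ℤ) + β - aZ := by omega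
        linarith [hDZ]
    have humem := Submodule.mem_map_of_mem (f := (Ideal.Quotient.mkₐ ℂ I).toLinearMap)
      (monomial_mem_polyCompA (p := p) _ hu 1)
    have hvmem := Submodule.mem_map_of_mem (f := (Ideal.Quotient.mkₐ ℂ I).toLinearMap)
      (monomial_mem_polyCompA (p := p) _ hv 1)
    have hprod := Submodule.mul_mem_mul humem hvmem
    have h0 : ∀ g : SPoly (Fin n), (Ideal.Quotient.mkₐ ℂ I).toLinearMap g = mk0 g := fun g => rfl
    have hkey : mk0 (monomial (mexp (Function.update a i 0) α₁ β₁) 1)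
        * mk0 (monomial (mexp vexp α₂ β₂) 1)
        = mk0 (∏ j, X (Sum.inl j) ^ r j) *
          (mk0 (∏ j ∈ F.erase i, Lin c0 c1 j) * mk0 (X (Sum.inr 0) ^ α * X (Sum.inr 1) ^ β)) := by
      rw [← map_mul, monomial_mul, one_mul, mexp_add]
      have hw : (Function.update a i 0 + vexp)
          = fun j => r j + (if j = i then 0 else if r j < a j then p j else 0) := by
        funext j
        by_cases hji : j = i
        · subst hji
          simp [hvexp]
        · have := ha j
          simp only [Pi.add_apply, Function.update_of_ne hji, hvexp, if_neg hji]
          by_cases hrj : r j < a j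
          · simp only [if_pos hrj]
            omega
          · simp only [if_neg hrj]
            omega
      rw [hw, hs2, hs3, monomial_mexp, map_mul, map_mul, map_prod]
      simp only [map_pow]
      have hXw : ∀ j : Fin n,
          mk0 (X (Sum.inl j)) ^ (r j + (if j = i then 0 else if r j < a j then p j else 0))
          = mk0 (X (Sum.inl j)) ^ (r j) * (if j ∈ F.erase i then mk0 (Lin c0 c1 j) else 1) := by
        intro j
        by_cases hji : j = i
        · subst hji
          rw [if_pos rfl, if_neg (fun hc => (Finset.mem_erase.1 hc).1 rfl)]
          rw [add_zero, mul_one]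
        · by_cases hrj : r j < a j
          · rw [if_neg hji, if_pos hrj, if_pos (Finset.mem_erase.2 ⟨hji, (hmemF j).2 hrj⟩)]
            rw [pow_add, hXp j]
          · rw [if_neg hji, if_neg hrj,
              if_neg (fun hc => hrj ((hmemF j).1 (Finset.mem_erase.1 hc).2))]
            rw [add_zero, mul_one]
      rw [Finset.prod_congr rfl (fun j (_ : j ∈ Finset.univ) => hXw j), Finset.prod_mul_distrib]
      rw [Finset.prod_ite_mem Finset.univ (F.erase i) (fun j => mk0 (Lin c0 c1 j)),
        Finset.univ_inter]
      simp only [map_prod, map_mul, map_pow]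
      ring
    rw [h0, h0, hkey] at hprod
    exact hprod
  -- factor the monomial
  have hfact : mk0 (monomial m 1) = mk0 (∏ j, X (Sum.inl j) ^ r j)
      * mk0 ((∏ j, Lin c0 c1 j ^ qn j) * (X (Sum.inr 0) ^ d0 * X (Sum.inr 1) ^ d1)) := by
    conv_lhs => rw [eq_mexp_self m, monomial_mexp]
    have hXb : ∀ j : Fin n, (mk0 (X (Sum.inl j)))^(m (Sum.inl j))
        = mk0 (X (Sum.inl j))^(r j) * mk0 (Lin c0 c1 j)^(qn j) := by
      intro j
      rw [hbsplit j, pow_add, pow_mul, hXp j]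
    rw [map_mul, map_mul, map_prod]
    simp only [map_pow]
    rw [Finset.prod_congr rfl (fun j (_ : j ∈ Finset.univ) => hXb j), Finset.prod_mul_distrib]
    rw [map_mul, map_prod, map_mul, map_prod]
    simp only [map_pow]
    ring
  have hH : (∏ j, Lin c0 c1 j ^ qn j) * (X (Sum.inr 0) ^ d0 * X (Sum.inr 1) ^ d1) ∈ TS n D := by
    have h1 := Lin_prod_mem c0 c1 qn Finset.univ
    have h2 : (X (Sum.inr 0) ^ d0 * X (Sum.inr 1) ^ d1 : SPoly (Fin n)) ∈ TS n (d0 + d1) :=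
      TS_mono_mem rfl
    exact TS_mul h1 h2
  rw [show (Ideal.Quotient.mk (SIdl (Fin n) p c0 c1)) (monomial m 1)
    = mk0 (monomial m 1) from rfl, hfact]
  set Φ : SPoly (Fin n) →ₗ[ℂ] SAlg (Fin n) p c0 c1 :=
    (LinearMap.mulLeft ℂ (mk0 (∏ j, X (Sum.inl j) ^ r j))).comp
      (Ideal.Quotient.mkₐ ℂ I).toLinearMap with hΦ
  have hΦap : ∀ g : SPoly (Fin n), Φ g = mk0 (∏ j, X (Sum.inl j) ^ r j) * mk0 g := fun g => rfl
  by_cases hFne : F.Nonempty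
  · -- partial fractions case
    have hsumQF : (F.card : ℤ) ≤ ∑ j ∈ F, Q j := by
      have h1 : ∑ j ∈ F, (1:ℤ) ≤ ∑ j ∈ F, Q j := Finset.sum_le_sum hQF
      simpa using h1
    have hsumQle : ∑ j ∈ F, Q j ≤ ∑ j, Q j :=
      Finset.sum_le_sum_of_subset_of_nonneg (Finset.subset_univ F) (fun j _ _ => hQ0 j)
    have htaZ : 0 ≤ t * aZ := mul_nonneg (by linarith) haZ
    have hcardD : F.card ≤ D + 1 := by
      have : (F.card : ℤ) ≤ (D : ℤ) + 1 := by linarith [hDZ]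
      exact_mod_cast this
    have hPF := PF c0 c1 hdist F hFne D hcardD
    have hHm := hPF hH
    have hsub : (⨆ i ∈ F, Submodule.map
          (LinearMap.mulLeft ℂ (∏ j ∈ F.erase i, Lin c0 c1 j)) (TS n (D + 1 - F.card)))
        ≤ Submodule.comap Φ (⨆ i : Fin n, SCompA p c0 c1 (x - a i • egen p i) *
          SCompA p c0 c1 ((t - 1) • x - ((p i : ℤ) - (a i : ℤ)) • egen p i)) := by
      refine iSup₂_le (fun i hi => ?_)
      rw [Submodule.map_le_iff_le_comap]
      rw [TS, Submodule.span_le]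
      rintro f ⟨α, β, hab, rfl⟩
      simp only [SetLike.mem_coe, Submodule.mem_comap, LinearMap.mulLeft_apply]
      rw [hΦap, map_mul]
      have hcard_i : (F.erase i).card = F.card - 1 := Finset.card_erase_of_mem hi
      have hFpos : 1 ≤ F.card := Finset.card_pos.2 hFne
      have hc1 : α + β + (F.erase i).card = D := by omega
      have hc2 : aZ.toNat ≤ α + β := by
        have hz : ((α + β : ℕ) : ℤ) = (D:ℤ) + 1 - F.card := by
          rw [hab]
          push_cast
          omega
        have h5 : aZ ≤ (D:ℤ) + 1 - F.card := by nlinarith [hDZ, hsumQF, hsumQle, haZ]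
        omega
      exact Submodule.mem_iSup_of_mem i (claim i α β hc1 hc2)
    exact hsub hHm
  · -- F empty
    have hFempty : F = ∅ := Finset.not_nonempty_iff_eq_empty.1 hFne
    have hsumQ0 : 0 ≤ ∑ j, Q j := Finset.sum_nonneg (fun j _ => hQ0 j)
    have hDaZ : aZ.toNat ≤ D := by
      have h5 : aZ ≤ (D:ℤ) := by
        rcases eq_or_lt_of_le haZ with h0 | h0
        · rw [← h0]; exact Int.natCast_nonneg D
        · nlinarith [hDZ]
      omega
    set i0 : Fin n := ⟨0, hn⟩ with hi0
    have hsub : TS n D ≤ Submodule.comap Φ (SCompA p c0 c1 (x - a i0 • egen p i0) *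
        SCompA p c0 c1 ((t - 1) • x - ((p i0 : ℤ) - (a i0 : ℤ)) • egen p i0)) := by
      rw [TS, Submodule.span_le]
      rintro f ⟨α, β, hab, rfl⟩
      simp only [SetLike.mem_coe, Submodule.mem_comap]
      rw [hΦap]
      have hc1 : α + β + (F.erase i0).card = D := by
        rw [hFempty]
        simpa using hab
      have := claim i0 α β hc1 (by omega)
      rw [hFempty] at this
      simpa using this
    exact Submodule.mem_iSup_of_mem i0 (hsub hH)
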